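/- Let p be a prime and m ≥ 1 an integer, and set n = p^m. Then the independent domination polynomial of the comaximal graph Γ(ℤ_n) is D_i(Γ(ℤ_n), x) = (p^m − p^{m−1})·x + x^{p^{m−1}} (which equals p·x when m = 1). -/

import Mathlib

open Polynomial

/-- The comaximal graph of `ℤ/nℤ`: distinct `a, b` are adjacent iff the ideal
generated by `a` and `b` is the whole ring. -/
def comaximalGraph (n : ℕ) : SimpleGraph (ZMod n) where
  Adj a b := a ≠ b ∧ Ideal.span ({a, b} : Set (ZMod n)) = ⊤
  symm := by
    constructor
    rintro a b ⟨hab, h⟩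
    refine ⟨hab.symm, ?_⟩
    rwa [Set.pair_comm]
  loopless := by
    constructor
    rintro a ⟨h, -⟩
    exact h rfl

/-- `S` is an independent dominating set of `G`. -/
def IsIndepDomSet {V : Type*} (G : SimpleGraph V) (S : Finset V) : Prop :=
  (∀ a ∈ S, ∀ b ∈ S, ¬ G.Adj a b) ∧ ∀ v : V, v ∉ S → ∃ u ∈ S, G.Adj u v

/-- The independent domination polynomial `D_i(G, x) = Σ_k d_i(G,k) x^k`. -/
noncomputable def indepDomPoly {V : Type*} (G : SimpleGraph V) : Polynomial ℝ :=
  ∑ k ∈ Finset.range (Nat.card V + 1),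
    Polynomial.C ((Nat.card {S : Finset V // IsIndepDomSet G S ∧ S.card = k}) : ℝ) *
      Polynomial.X ^ k

/-- The independence polynomial `I(G, x) = Σ_k c_k x^k`. -/
noncomputable def indepPoly {V : Type*} (G : SimpleGraph V) : Polynomial ℝ :=
  ∑ k ∈ Finset.range (Nat.card V + 1),
    Polynomial.C ((Nat.card {S : Finset V //
        (∀ a ∈ S, ∀ b ∈ S, ¬ G.Adj a b) ∧ S.card = k}) : ℝ) *
      Polynomial.X ^ k

open scoped Classical

section aux
variable {p m : ℕ}

private lemma aux_one_lt (hp : p.Prime) (hm : 1 ≤ m) : 1 < p ^ m :=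
  lt_of_lt_of_le hp.one_lt (Nat.le_self_pow (by omega) p)

private lemma aux_isUnit_iff (hp : p.Prime) (hm : 1 ≤ m) (a : ZMod (p ^ m)) :
    IsUnit a ↔ ¬ p ∣ a.val := by
  haveI : NeZero (p ^ m) := ⟨(pow_pos hp.pos m).ne'⟩
  conv_lhs => rw [← ZMod.natCast_zmod_val a]
  rw [ZMod.isUnit_iff_coprime, Nat.coprime_pow_right_iff (by omega),
    Nat.coprime_comm, Nat.Prime.coprime_iff_not_dvd hp]

private lemma aux_span (hp : p.Prime) (hm : 1 ≤ m) (a b : ZMod (p ^ m)) :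
    Ideal.span ({a, b} : Set (ZMod (p ^ m))) = ⊤ ↔ IsUnit a ∨ IsUnit b := by
  haveI : Fact (1 < p ^ m) := ⟨aux_one_lt hp hm⟩
  constructor
  · intro h
    by_contra hc
    push_neg at hc
    obtain ⟨ha, hb⟩ := hc
    rw [aux_isUnit_iff hp hm, not_not] at ha hb
    have h1 : (1 : ZMod (p ^ m)) ∈ Ideal.span ({a, b} : Set (ZMod (p ^ m))) :=
      h ▸ Submodule.mem_top
    rw [Ideal.mem_span_pair] at h1
    obtain ⟨x, y, hxy⟩ := h1
    have hdvd : p ∣ p ^ m := dvd_pow_self p (by omega)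
    have h2 : p ∣ (x * a + y * b).val := by
      rw [ZMod.val_add, Nat.dvd_mod_iff hdvd]
      exact Nat.dvd_add
        (by rw [ZMod.val_mul, Nat.dvd_mod_iff hdvd]; exact Dvd.dvd.mul_left ha x.val)
        (by rw [ZMod.val_mul, Nat.dvd_mod_iff hdvd]; exact Dvd.dvd.mul_left hb y.val)
    rw [hxy, ZMod.val_one] at h2
    have := Nat.le_of_dvd one_pos h2
    have := hp.two_le
    omega
  · rintro (h | h)
    · exact Ideal.eq_top_of_isUnit_mem _ (Ideal.subset_span (Set.mem_insert a _)) h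
    · exact Ideal.eq_top_of_isUnit_mem _
        (Ideal.subset_span (Set.mem_insert_of_mem _ rfl)) h

private lemma aux_adj (hp : p.Prime) (hm : 1 ≤ m) (a b : ZMod (p ^ m)) :
    (comaximalGraph (p ^ m)).Adj a b ↔ a ≠ b ∧ (IsUnit a ∨ IsUnit b) :=
  and_congr_right fun _ => aux_span hp hm a b

private lemma aux_char (hp : p.Prime) (hm : 1 ≤ m) [NeZero (p ^ m)]
    (S : Finset (ZMod (p ^ m))) :
    IsIndepDomSet (comaximalGraph (p ^ m)) S ↔
      (∃ u : ZMod (p ^ m), IsUnit u ∧ S = {u}) ∨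
        S = Finset.univ.filter (fun a : ZMod (p ^ m) => ¬ IsUnit a) := by
  haveI : Fact (1 < p ^ m) := ⟨aux_one_lt hp hm⟩
  constructor
  · rintro ⟨hind, hdom⟩
    by_cases hu : ∃ u ∈ S, IsUnit u
    · obtain ⟨u, huS, hu⟩ := hu
      left
      refine ⟨u, hu, Finset.eq_singleton_iff_unique_mem.mpr ⟨huS, fun b hbS => ?_⟩⟩
      by_contra hbu
      exact hind u huS b hbS ((aux_adj hp hm u b).mpr ⟨fun h => hbu h.symm, Or.inl hu⟩)
    · right
      push_neg at hu
      ext a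
      simp only [Finset.mem_filter, Finset.mem_univ, true_and]
      constructor
      · exact hu a
      · intro ha
        by_contra haS
        obtain ⟨u, huS, hadj⟩ := hdom a haS
        rcases ((aux_adj hp hm u a).mp hadj).2 with h | h
        · exact hu u huS h
        · exact ha h
  · rintro (⟨u, hu, rfl⟩ | hS)
    · constructor
      · intro a ha b hb hadj
        rw [Finset.mem_singleton] at ha hb
        subst ha; subst hb
        exact hadj.1 rfl
      · intro v hv
        rw [Finset.mem_singleton] at hv
        exact ⟨u, Finset.mem_singleton_self u,
          (aux_adj hp hm u v).mpr ⟨fun h => hv h.symm, Or.inl hu⟩⟩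
    · rw [hS]
      constructor
      · intro a ha b hb hadj
        simp only [Finset.mem_filter, Finset.mem_univ, true_and] at ha hb
        rcases ((aux_adj hp hm a b).mp hadj).2 with h | h
        · exact ha h
        · exact hb h
      · intro v hv
        simp only [Finset.mem_filter, Finset.mem_univ, true_and, not_not] at hv
        refine ⟨0, ?_, (aux_adj hp hm 0 v).mpr ⟨?_, Or.inr hv⟩⟩
        · simp only [Finset.mem_filter, Finset.mem_univ, true_and]
          exact not_isUnit_zero
        · rintro rfl
          exact not_isUnit_zero hv

private lemma aux_units_card (hp : p.Prime) (hm : 1 ≤ m) [NeZero (p ^ m)] :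
    (Finset.univ.filter (fun a : ZMod (p ^ m) => IsUnit a)).card = p ^ m - p ^ (m - 1) := by
  rw [← Fintype.card_subtype]
  have e : {a : ZMod (p ^ m) // IsUnit a} ≃ (ZMod (p ^ m))ˣ :=
    (Equiv.subtypeEquivRight fun a => by
      conv_lhs => rw [← ZMod.natCast_zmod_val a]
      rw [ZMod.isUnit_iff_coprime]).trans ZMod.unitsEquivCoprime.symm
  rw [Fintype.card_congr e, ZMod.card_units_eq_totient,
    Nat.totient_prime_pow hp (by omega : 0 < m)]
  have h1 : m - 1 + 1 = m := by omega
  rw [Nat.mul_sub, mul_one, ← pow_succ, h1]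

private lemma aux_nonunits_card (hp : p.Prime) (hm : 1 ≤ m) [NeZero (p ^ m)] :
    (Finset.univ.filter (fun a : ZMod (p ^ m) => ¬ IsUnit a)).card = p ^ (m - 1) := by
  have h := Finset.card_filter_add_card_filter_not
    (s := (Finset.univ : Finset (ZMod (p ^ m)))) (p := fun a : ZMod (p ^ m) => IsUnit a)
  rw [aux_units_card hp hm, Finset.card_univ, ZMod.card] at h
  have hle : p ^ (m - 1) ≤ p ^ m := Nat.pow_le_pow_right hp.one_lt.le (by omega)
  omega

private lemma aux_count (hp : p.Prime) (hm : 1 ≤ m) [NeZero (p ^ m)] (k : ℕ) :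
    Nat.card {S : Finset (ZMod (p ^ m)) //
        IsIndepDomSet (comaximalGraph (p ^ m)) S ∧ S.card = k}
      = (if k = 1 then p ^ m - p ^ (m - 1) else 0)
        + (if k = p ^ (m - 1) then 1 else 0) := by
  haveI : Fact (1 < p ^ m) := ⟨aux_one_lt hp hm⟩
  have h0NU : (0 : ZMod (p ^ m)) ∈
      Finset.univ.filter (fun a : ZMod (p ^ m) => ¬ IsUnit a) := by
    simp only [Finset.mem_filter, Finset.mem_univ, true_and]
    exact not_isUnit_zero
  rw [Nat.card_eq_fintype_card, Fintype.card_subtype]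
  have key : ∀ S ∈ (Finset.univ : Finset (Finset (ZMod (p ^ m)))),
      ((IsIndepDomSet (comaximalGraph (p ^ m)) S ∧ S.card = k) ↔
        (((∃ u : ZMod (p ^ m), IsUnit u ∧ S = {u}) ∧ S.card = k)
          ∨ (S = Finset.univ.filter (fun a : ZMod (p ^ m) => ¬ IsUnit a) ∧ S.card = k))) :=
    fun S _ => by rw [aux_char hp hm S, or_and_right]
  rw [Finset.filter_congr key, Finset.filter_or]
  have hdisj : Disjoint
      (Finset.univ.filter (fun S : Finset (ZMod (p ^ m)) =>
        (∃ u : ZMod (p ^ m), IsUnit u ∧ S = {u}) ∧ S.card = k))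
      (Finset.univ.filter (fun S : Finset (ZMod (p ^ m)) =>
        S = Finset.univ.filter (fun a : ZMod (p ^ m) => ¬ IsUnit a) ∧ S.card = k)) := by
    rw [Finset.disjoint_left]
    rintro S hS1 hS2
    simp only [Finset.mem_filter, Finset.mem_univ, true_and] at hS1 hS2
    obtain ⟨⟨u, hu, rfl⟩, -⟩ := hS1
    obtain ⟨hEq, -⟩ := hS2
    have h0 : (0 : ZMod (p ^ m)) ∈ ({u} : Finset (ZMod (p ^ m))) := by
      rw [hEq]; exact h0NU
    rw [Finset.mem_singleton] at h0
    rw [← h0] at hu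
    exact not_isUnit_zero hu
  rw [Finset.card_union_of_disjoint hdisj]
  have hA : (Finset.univ.filter (fun S : Finset (ZMod (p ^ m)) =>
      (∃ u : ZMod (p ^ m), IsUnit u ∧ S = {u}) ∧ S.card = k)).card
      = if k = 1 then p ^ m - p ^ (m - 1) else 0 := by
    by_cases hk : k = 1
    · subst hk
      rw [if_pos rfl]
      have himg : Finset.univ.filter (fun S : Finset (ZMod (p ^ m)) =>
          (∃ u : ZMod (p ^ m), IsUnit u ∧ S = {u}) ∧ S.card = 1)
          = (Finset.univ.filter (fun a : ZMod (p ^ m) => IsUnit a)).image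
              (fun a => ({a} : Finset (ZMod (p ^ m)))) := by
        ext S
        simp only [Finset.mem_filter, Finset.mem_univ, true_and, Finset.mem_image]
        constructor
        · rintro ⟨⟨u, hu, rfl⟩, -⟩
          exact ⟨u, hu, rfl⟩
        · rintro ⟨u, hu, rfl⟩
          exact ⟨⟨u, hu, rfl⟩, Finset.card_singleton u⟩
      rw [himg, Finset.card_image_of_injective _ Finset.singleton_injective,
        aux_units_card hp hm]
    · rw [if_neg hk, Finset.card_eq_zero, Finset.filter_eq_empty_iff]
      rintro S - ⟨⟨u, -, rfl⟩, hcard⟩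
      exact hk (by simpa using hcard.symm)
  have hB : (Finset.univ.filter (fun S : Finset (ZMod (p ^ m)) =>
      S = Finset.univ.filter (fun a : ZMod (p ^ m) => ¬ IsUnit a) ∧ S.card = k)).card
      = if k = p ^ (m - 1) then 1 else 0 := by
    have hc := aux_nonunits_card (p := p) (m := m) hp hm
    by_cases hk : k = p ^ (m - 1)
    · subst hk
      rw [if_pos rfl]
      have : Finset.univ.filter (fun S : Finset (ZMod (p ^ m)) =>
          S = Finset.univ.filter (fun a : ZMod (p ^ m) => ¬ IsUnit a)
            ∧ S.card = p ^ (m - 1))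
          = {Finset.univ.filter (fun a : ZMod (p ^ m) => ¬ IsUnit a)} := by
        ext S
        simp only [Finset.mem_filter, Finset.mem_univ, true_and, Finset.mem_singleton]
        exact ⟨fun h => h.1, fun h => ⟨h, by rw [h, hc]⟩⟩
      rw [this, Finset.card_singleton]
    · rw [if_neg hk, Finset.card_eq_zero, Finset.filter_eq_empty_iff]
      rintro S - ⟨hS, hcard⟩
      rw [hS, hc] at hcard
      exact hk hcard.symm
  rw [hA, hB]

end aux

/-- For `n = p^m` with `p` prime and `m ≥ 1`,
`D_i(Γ(ℤ_n), x) = (p^m − p^(m−1))·x + x^(p^(m−1))`. -/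
theorem stmt_6 (p m : ℕ) (hp : p.Prime) (hm : 1 ≤ m) :
    indepDomPoly (comaximalGraph (p ^ m)) =
      Polynomial.C ((p ^ m - p ^ (m - 1) : ℕ) : ℝ) * Polynomial.X +
        Polynomial.X ^ (p ^ (m - 1)) := by
  haveI : NeZero (p ^ m) := ⟨(pow_pos hp.pos m).ne'⟩
  haveI : Fact (1 < p ^ m) := ⟨aux_one_lt hp hm⟩
  have hcardV : Nat.card (ZMod (p ^ m)) = p ^ m := Nat.card_zmod (p ^ m)
  unfold indepDomPoly
  rw [hcardV]
  have hsum : ∀ k ∈ Finset.range (p ^ m + 1),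
      Polynomial.C ((Nat.card {S : Finset (ZMod (p ^ m)) //
          IsIndepDomSet (comaximalGraph (p ^ m)) S ∧ S.card = k}) : ℝ)
          * Polynomial.X ^ k
        = (if k = 1 then Polynomial.C ((p ^ m - p ^ (m - 1) : ℕ) : ℝ)
            * Polynomial.X ^ k else 0)
          + (if k = p ^ (m - 1) then Polynomial.X ^ k else 0) := by
    intro k _
    rw [aux_count hp hm k]
    push_cast
    rw [Polynomial.C_add, add_mul]
    congr 1
    · split_ifs <;> simp
    · split_ifs <;> simp
  rw [Finset.sum_congr rfl hsum, Finset.sum_add_distrib,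
    Finset.sum_ite_eq' (Finset.range (p ^ m + 1)) 1,
    Finset.sum_ite_eq' (Finset.range (p ^ m + 1)) (p ^ (m - 1))]
  have h1 : (1 : ℕ) ∈ Finset.range (p ^ m + 1) := by
    rw [Finset.mem_range]
    have := aux_one_lt hp hm
    omega
  have h2 : p ^ (m - 1) ∈ Finset.range (p ^ m + 1) := by
    rw [Finset.mem_range]
    have : p ^ (m - 1) ≤ p ^ m := Nat.pow_le_pow_right hp.one_lt.le (by omega)
    omega
  rw [if_pos h1, if_pos h2, pow_one]
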